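/- arXiv:2305.10560 — 3 statements merged into one kernel-verified Lean document; each statement's English description precedes it below -/
import Mathlib

section
/- Let N ≥ 2, θ = 2π/(2N-1), and ξ_k = e^{ikθ}. There exists ε₀ > 0 (depending only on N) such that for every complex z with |z| ≤ ε₀, there exist nonnegative reals p_0, ..., p_{2N-2} with ∑_{k=0}^{2N-2} p_k = 1 and z^m = ∑_{k=0}^{2N-2} p_k ξ_k^m for all 0 ≤ m ≤ N-1. -/
theorem stmt5 (N : ℕ) (hN : 2 ≤ N) (ξ : ℕ → ℂ)
    (hξ : ∀ k, ξ k = Complex.exp (2 * Real.pi * Complex.I * k / (2 * N - 1))) :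
    ∃ ε₀ : ℝ, 0 < ε₀ ∧
      ∀ z : ℂ, ‖z‖ ≤ ε₀ →
        ∃ p : ℕ → ℝ, (∀ k, 0 ≤ p k) ∧
          (∑ k ∈ Finset.range (2 * N - 1), p k = 1) ∧
          ∀ m ≤ N - 1, z ^ m = ∑ k ∈ Finset.range (2 * N - 1), (p k : ℂ) * ξ k ^ m := by
  have hNpos : (0 : ℝ) < N := by positivity
  have h2N : (2 : ℝ) ≤ N := by exact_mod_cast hN
  set M : ℕ := 2 * N - 1 with hMdef
  have hMne : M ≠ 0 := by omega
  set ζ : ℂ := Complex.exp (2 * Real.pi * Complex.I / M) with hζdef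
  have hprim : IsPrimitiveRoot ζ M := Complex.isPrimitiveRoot_exp M hMne
  have hζM : ζ ^ M = 1 := hprim.pow_eq_one
  have hMC : (M : ℂ) ≠ 0 := Nat.cast_ne_zero.mpr hMne
  have hcastM : (M : ℂ) = 2 * (N : ℂ) - 1 := by
    rw [hMdef]
    push_cast [Nat.cast_sub (show 1 ≤ 2 * N by omega)]
    ring
  have hξζ : ∀ k : ℕ, ξ k = ζ ^ k := by
    intro k
    rw [hξ, hζdef, ← Complex.exp_nat_mul]
    congr 1
    rw [hcastM]
    ring
  have habs1 : ∀ n : ℕ, ‖ζ ^ n‖ = 1 := by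
    intro n
    rw [hζdef, ← Complex.exp_nat_mul]
    have h2 : (n : ℂ) * (2 * Real.pi * Complex.I / M) =
        ((2 * Real.pi * n / M : ℝ) : ℂ) * Complex.I := by
      push_cast; ring
    rw [h2, Complex.norm_exp_ofReal_mul_I]
  have hconj : ∀ a b : ℕ, a + b = M → (starRingEnd ℂ) (ζ ^ a) = ζ ^ b := by
    intro a b hab
    have h1 : ζ ^ a * ζ ^ b = 1 := by rw [← pow_add, hab, hζM]
    rw [← Complex.inv_eq_conj (habs1 a)]
    exact inv_eq_of_mul_eq_one_right h1
  have hkey : ∀ t : ℕ, ∑ k ∈ Finset.range M, (ζ ^ t) ^ k = if M ∣ t then (M : ℂ) else 0 := by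
    intro t
    by_cases h : M ∣ t
    · rw [if_pos h, (hprim.pow_eq_one_iff_dvd t).mpr h]
      simp
    · rw [if_neg h, geom_sum_eq (fun h1 => h ((hprim.pow_eq_one_iff_dvd t).mp h1))]
      rw [← pow_mul, mul_comm t M, pow_mul, hζM, one_pow, sub_self, zero_div]
  refine ⟨1 / (4 * N), by positivity, ?_⟩
  intro z hz
  have hz0 : 0 ≤ ‖z‖ := norm_nonneg _
  have hz1 : ‖z‖ ≤ 1 := by
    refine le_trans hz ?_
    rw [div_le_one (by positivity)]
    have h2N : (2 : ℝ) ≤ N := by exact_mod_cast hN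
    linarith
  set S : ℕ → ℂ := fun k => ∑ j ∈ Finset.Icc 1 (N - 1), z ^ j * (ζ ^ (M - j)) ^ k with hSdef
  set p : ℕ → ℝ := fun k => (1 + 2 * (S k).re) / M with hpdef
  have hSbound : ∀ k, ‖S k‖ ≤ ((N : ℝ) - 1) * ‖z‖ := by
    intro k
    have hcard : (Finset.Icc 1 (N - 1)).card = N - 1 := by rw [Nat.card_Icc]; omega
    calc ‖S k‖
        ≤ ∑ j ∈ Finset.Icc 1 (N - 1), ‖z ^ j * (ζ ^ (M - j)) ^ k‖ := by
          simp only [hSdef]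
          exact norm_sum_le _ _
      _ ≤ ∑ j ∈ Finset.Icc 1 (N - 1), ‖z‖ := by
          refine Finset.sum_le_sum fun j hj => ?_
          rw [Finset.mem_Icc] at hj
          rw [norm_mul, norm_pow, norm_pow, habs1, one_pow, mul_one]
          exact pow_le_of_le_one hz0 hz1 (by omega)
      _ = ((N : ℝ) - 1) * ‖z‖ := by
          rw [Finset.sum_const, hcard, nsmul_eq_mul]
          congr 1
          push_cast [Nat.cast_sub (show 1 ≤ N by omega)]
          ring
  have hppos : ∀ k, 0 ≤ p k := by
    intro k
    have h1 : -(‖S k‖) ≤ (S k).re :=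
      (abs_le.mp (Complex.abs_re_le_norm (S k))).1
    have h2 := hSbound k
    have hN1 : (0 : ℝ) ≤ (N : ℝ) - 1 := by linarith
    have h3 : ((N : ℝ) - 1) * ‖z‖ ≤ ((N : ℝ) - 1) * (1 / (4 * N)) :=
      mul_le_mul_of_nonneg_left hz hN1
    have h4 : ((N : ℝ) - 1) * (1 / (4 * N)) ≤ 1 / 2 := by
      rw [mul_one_div, div_le_div_iff₀ (by positivity) (by norm_num)]
      nlinarith
    apply div_nonneg _ (Nat.cast_nonneg M)
    linarith
  have hC : ∀ m : ℕ, m ≤ N - 1 →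
      ∑ k ∈ Finset.range M, (p k : ℂ) * (ζ ^ m) ^ k = z ^ m := by
    intro m hm
    have hmM : m < M := by omega
    have hpk : ∀ k, (p k : ℂ) = (1 + (S k + (starRingEnd ℂ) (S k))) / M := by
      intro k
      simp only [hpdef]
      rw [Complex.add_conj]
      push_cast
      ring
    have step1 : ∑ k ∈ Finset.range M, (p k : ℂ) * (ζ ^ m) ^ k
        = (∑ k ∈ Finset.range M, (ζ ^ m) ^ k
          + ∑ k ∈ Finset.range M, S k * (ζ ^ m) ^ k
          + ∑ k ∈ Finset.range M, (starRingEnd ℂ) (S k) * (ζ ^ m) ^ k) / M := by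
      rw [← Finset.sum_add_distrib, ← Finset.sum_add_distrib, Finset.sum_div]
      refine Finset.sum_congr rfl fun k _ => ?_
      rw [hpk k]
      ring
    have hA : ∑ k ∈ Finset.range M, (ζ ^ m) ^ k = if m = 0 then (M : ℂ) else 0 := by
      rw [hkey m]
      by_cases h0 : m = 0
      · rw [if_pos (h0 ▸ dvd_zero M), if_pos h0]
      · rw [if_neg h0, if_neg]
        intro hd
        exact absurd (Nat.le_of_dvd (Nat.pos_of_ne_zero h0) hd) (not_le.mpr hmM)
    have hB : ∑ k ∈ Finset.range M, S k * (ζ ^ m) ^ k = if 1 ≤ m then z ^ m * M else 0 := by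
      have e1 : ∀ k, S k * (ζ ^ m) ^ k
          = ∑ j ∈ Finset.Icc 1 (N - 1), z ^ j * (ζ ^ (M - j + m)) ^ k := by
        intro k
        simp only [hSdef]
        rw [Finset.sum_mul]
        refine Finset.sum_congr rfl fun j hj => ?_
        rw [mul_assoc, ← mul_pow, ← pow_add]
      calc ∑ k ∈ Finset.range M, S k * (ζ ^ m) ^ k
          = ∑ k ∈ Finset.range M, ∑ j ∈ Finset.Icc 1 (N - 1),
              z ^ j * (ζ ^ (M - j + m)) ^ k := Finset.sum_congr rfl fun k _ => e1 k
        _ = ∑ j ∈ Finset.Icc 1 (N - 1), ∑ k ∈ Finset.range M,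
              z ^ j * (ζ ^ (M - j + m)) ^ k := Finset.sum_comm
        _ = ∑ j ∈ Finset.Icc 1 (N - 1),
              z ^ j * (if M ∣ (M - j + m) then (M : ℂ) else 0) := by
            refine Finset.sum_congr rfl fun j hj => ?_
            rw [← Finset.mul_sum, hkey]
        _ = ∑ j ∈ Finset.Icc 1 (N - 1), (if j = m then z ^ j * (M : ℂ) else 0) := by
            refine Finset.sum_congr rfl fun j hj => ?_
            rw [Finset.mem_Icc] at hj
            by_cases hjm : j = m
            · subst hjm
              have hd : M ∣ (M - j + j) := by
                have he : M - j + j = M := by omega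
                rw [he]
              rw [if_pos rfl, if_pos hd]
            · rw [if_neg hjm, if_neg, mul_zero]
              rintro ⟨c, hc⟩
              have hc2 : c < 2 := by
                by_contra hcc
                push_neg at hcc
                have h2 : M * 2 ≤ M * c := Nat.mul_le_mul_left M hcc
                rw [← hc] at h2
                omega
              interval_cases c <;> omega
        _ = if m ∈ Finset.Icc 1 (N - 1) then z ^ m * (M : ℂ) else 0 :=
            Finset.sum_ite_eq' _ _ _
        _ = if 1 ≤ m then z ^ m * M else 0 := by
            simp only [Finset.mem_Icc]
            by_cases h1 : 1 ≤ m
            · rw [if_pos ⟨h1, hm⟩, if_pos h1]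
            · rw [if_neg (fun h => h1 h.1), if_neg h1]
    have hC0 : ∑ k ∈ Finset.range M, (starRingEnd ℂ) (S k) * (ζ ^ m) ^ k = 0 := by
      have e1 : ∀ k, (starRingEnd ℂ) (S k) * (ζ ^ m) ^ k
          = ∑ j ∈ Finset.Icc 1 (N - 1), ((starRingEnd ℂ) z) ^ j * (ζ ^ (j + m)) ^ k := by
        intro k
        simp only [hSdef]
        rw [map_sum, Finset.sum_mul]
        refine Finset.sum_congr rfl fun j hj => ?_
        rw [Finset.mem_Icc] at hj
        rw [map_mul, map_pow, map_pow, hconj (M - j) j (by omega)]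
        rw [mul_assoc, ← mul_pow, ← pow_add]
      calc ∑ k ∈ Finset.range M, (starRingEnd ℂ) (S k) * (ζ ^ m) ^ k
          = ∑ k ∈ Finset.range M, ∑ j ∈ Finset.Icc 1 (N - 1),
              ((starRingEnd ℂ) z) ^ j * (ζ ^ (j + m)) ^ k :=
            Finset.sum_congr rfl fun k _ => e1 k
        _ = ∑ j ∈ Finset.Icc 1 (N - 1), ∑ k ∈ Finset.range M,
              ((starRingEnd ℂ) z) ^ j * (ζ ^ (j + m)) ^ k := Finset.sum_comm
        _ = 0 := by
            refine Finset.sum_eq_zero fun j hj => ?_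
            rw [Finset.mem_Icc] at hj
            rw [← Finset.mul_sum, hkey, if_neg, mul_zero]
            intro hd
            have := Nat.le_of_dvd (by omega) hd
            omega
    rw [step1, hA, hB, hC0]
    by_cases h0 : m = 0
    · subst h0
      rw [if_pos rfl, if_neg (by omega), pow_zero]
      field_simp
      ring
    · rw [if_neg h0, if_pos (by omega : 1 ≤ m)]
      field_simp
      ring
  refine ⟨p, hppos, ?_, ?_⟩
  · have h0 := hC 0 (by omega)
    simp only [pow_zero, one_pow, mul_one] at h0
    have h1 : ((∑ k ∈ Finset.range M, p k : ℝ) : ℂ) = ((1 : ℝ) : ℂ) := by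
      push_cast
      simpa using h0
    exact_mod_cast h1
  · intro m hm
    rw [Finset.sum_congr rfl fun k _ => by rw [hξζ k, ← pow_mul, mul_comm k m, pow_mul]]
    exact (hC m hm).symm
end

section
/- There exists a polynomial p(z) = a₀ + a₁z + a₂z² with complex coefficients and a point z₀ in the convex hull of {1, ω, ω²} (where ω = e^{2πi/3}) such that |p(z₀)| > max{|p(1)|, |p(ω)|, |p(ω²)|}. In fact one can achieve |p(z₀)| ≥ (1 + 2√3)/4 while max_{k} |p(ω^k)| = 1. -/
theorem stmt7 (ω : ℂ) (hω : ω = Complex.exp (2 * Real.pi * Complex.I / 3)) :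
    ∃ a₀ a₁ a₂ z₀ : ℂ,
      z₀ ∈ convexHull ℝ ({1, ω, ω ^ 2} : Set ℂ) ∧
      max (‖a₀ + a₁ * 1 + a₂ * 1 ^ 2‖)
        (max (‖a₀ + a₁ * ω + a₂ * ω ^ 2‖)
          (‖a₀ + a₁ * ω ^ 2 + a₂ * (ω ^ 2) ^ 2‖)) = 1 ∧
      (1 + 2 * Real.sqrt 3) / 4 ≤ ‖a₀ + a₁ * z₀ + a₂ * z₀ ^ 2‖ ∧
      max (‖a₀ + a₁ * 1 + a₂ * 1 ^ 2‖)
        (max (‖a₀ + a₁ * ω + a₂ * ω ^ 2‖)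
          (‖a₀ + a₁ * ω ^ 2 + a₂ * (ω ^ 2) ^ 2‖))
        < ‖a₀ + a₁ * z₀ + a₂ * z₀ ^ 2‖ := by
  set r : ℝ := Real.sqrt 3 with hr
  have hr3 : r ^ 2 = 3 := Real.sq_sqrt (by norm_num)
  have hrpos : (0:ℝ) < r := Real.sqrt_pos.mpr (by norm_num)
  have hrc : ((r:ℂ)) ^ 2 = 3 := by norm_cast
  -- explicit form of ω
  have hcos : Real.cos (2 * Real.pi / 3) = -(1/2) := by
    have h : 2 * Real.pi / 3 = Real.pi - Real.pi / 3 := by ring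
    rw [h, Real.cos_pi_sub, Real.cos_pi_div_three]
  have hsin : Real.sin (2 * Real.pi / 3) = r / 2 := by
    have h : 2 * Real.pi / 3 = Real.pi - Real.pi / 3 := by ring
    rw [h, Real.sin_pi_sub, Real.sin_pi_div_three, hr]
  have hωe : ω = (-(1/2) : ℝ) + (r/2 : ℝ) * Complex.I := by
    rw [hω]
    have h1 : (2 * (Real.pi:ℂ) * Complex.I / 3) = ((2 * Real.pi / 3 : ℝ) : ℂ) * Complex.I := by
      push_cast; ring
    rw [h1, Complex.exp_mul_I, ← Complex.ofReal_cos, ← Complex.ofReal_sin, hcos, hsin]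
  have hω2 : ω ^ 2 = (-(1/2) : ℝ) + (-(r/2) : ℝ) * Complex.I := by
    rw [hωe]
    push_cast
    linear_combination ((r:ℂ)^2/4) * Complex.I_sq - (1/4 : ℂ) * hrc
  refine ⟨((1+r)/3 : ℝ), ((1-r)/3 : ℝ), (1/3 : ℝ), (-(1/2) : ℝ), ?_, ?_, ?_, ?_⟩
  · -- convex hull membership: -1/2 = (1/2)•ω + (1/2)•ω²
    have h1 : ω ∈ ({1, ω, ω ^ 2} : Set ℂ) := by simp
    have h2 : ω ^ 2 ∈ ({1, ω, ω ^ 2} : Set ℂ) := by simp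
    have hc := (convex_convexHull ℝ ({1, ω, ω ^ 2} : Set ℂ))
      (subset_convexHull ℝ _ h1) (subset_convexHull ℝ _ h2)
      (by norm_num : (0:ℝ) ≤ 1/2) (by norm_num : (0:ℝ) ≤ 1/2) (by norm_num)
    convert hc using 1
    rw [hω2, hωe]
    simp [Complex.real_smul]
    ring
  · -- max of vertex values is 1
    have hv1 : ((((1+r)/3:ℝ)):ℂ) + ((1-r)/3:ℝ) * 1 + ((1/3:ℝ)) * 1 ^ 2 = 1 := by
      push_cast; ring
    have hv2 : ((((1+r)/3:ℝ)):ℂ) + ((1-r)/3:ℝ) * ω + ((1/3:ℝ)) * ω ^ 2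
        = (r/2 : ℝ) + (-(1/2) : ℝ) * Complex.I := by
      rw [hω2, hωe]; push_cast
      linear_combination (-(Complex.I)/6) * hrc
    have hv3 : ((((1+r)/3:ℝ)):ℂ) + ((1-r)/3:ℝ) * ω ^ 2 + ((1/3:ℝ)) * (ω ^ 2) ^ 2
        = (r/2 : ℝ) + ((1/2) : ℝ) * Complex.I := by
      rw [hω2]; push_cast
      linear_combination ((r:ℂ)^2/12) * Complex.I_sq + (Complex.I/6 - 1/12) * hrc
    rw [hv1, hv2, hv3]
    have habs : ∀ y : ℝ, ‖((r/2 : ℝ) : ℂ) + (y : ℝ) * Complex.I‖ = Real.sqrt (r^2/4 + y^2) := by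
      intro y
      rw [Complex.norm_def, Complex.normSq_apply]
      simp
      ring_nf
    rw [habs, habs]
    have : r^2/4 + (-(1/2):ℝ)^2 = 1 := by rw [hr3]; norm_num
    rw [this]
    have : r^2/4 + ((1/2):ℝ)^2 = 1 := by rw [hr3]; norm_num
    rw [this]
    simp
  · -- value at z₀
    have hv : ((((1+r)/3:ℝ)):ℂ) + ((1-r)/3:ℝ) * (-(1/2):ℝ) + ((1/3:ℝ)) * ((-(1/2):ℝ):ℂ) ^ 2
        = (((1 + 2*r)/4 : ℝ) : ℂ) := by
      push_cast; ring
    rw [hv, Complex.norm_real, Real.norm_eq_abs, abs_of_nonneg (by positivity)]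
  · -- strict inequality
    have hv1 : ((((1+r)/3:ℝ)):ℂ) + ((1-r)/3:ℝ) * 1 + ((1/3:ℝ)) * 1 ^ 2 = 1 := by
      push_cast; ring
    have hv2 : ((((1+r)/3:ℝ)):ℂ) + ((1-r)/3:ℝ) * ω + ((1/3:ℝ)) * ω ^ 2
        = (r/2 : ℝ) + (-(1/2) : ℝ) * Complex.I := by
      rw [hω2, hωe]; push_cast
      linear_combination (-(Complex.I)/6) * hrc
    have hv3 : ((((1+r)/3:ℝ)):ℂ) + ((1-r)/3:ℝ) * ω ^ 2 + ((1/3:ℝ)) * (ω ^ 2) ^ 2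
        = (r/2 : ℝ) + ((1/2) : ℝ) * Complex.I := by
      rw [hω2]; push_cast
      linear_combination ((r:ℂ)^2/12) * Complex.I_sq + (Complex.I/6 - 1/12) * hrc
    have hv : ((((1+r)/3:ℝ)):ℂ) + ((1-r)/3:ℝ) * (-(1/2):ℝ) + ((1/3:ℝ)) * ((-(1/2):ℝ):ℂ) ^ 2
        = (((1 + 2*r)/4 : ℝ) : ℂ) := by
      push_cast; ring
    rw [hv1, hv2, hv3, hv, Complex.norm_real, Real.norm_eq_abs, abs_of_nonneg (by positivity)]
    have habs : ∀ y : ℝ, ‖((r/2 : ℝ) : ℂ) + (y : ℝ) * Complex.I‖ = Real.sqrt (r^2/4 + y^2) := by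
      intro y
      rw [Complex.norm_def, Complex.normSq_apply]
      simp
      ring_nf
    rw [habs, habs]
    have h1 : r^2/4 + (-(1/2):ℝ)^2 = 1 := by rw [hr3]; norm_num
    have h2 : r^2/4 + ((1/2):ℝ)^2 = 1 := by rw [hr3]; norm_num
    rw [h1, h2]
    simp only [Real.sqrt_one, map_one, norm_one, max_self]
    have : (3:ℝ)/2 < r := by
      nlinarith
    linarith
end

section
/- Fix N ≥ 3 and let f : Ω_N^n → ℂ be a polynomial of degree at most d with ‖f‖_∞ ≤ 1 on Ω_N^n, whose Fourier coefficients satisfy (∑_{|α| ≤ d} |a_α|^{2d/(d+1)})^{(d+1)/(2d)} ≤ B. Then for every ε > 0, there is a polynomial g depending on at most d·B^{2d}/ε^{2d} coordinates such that ∑_α |a_α - ĝ(α)|² ≤ ε², where ĝ is the Fourier coefficient sequence of g. -/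
theorem stmt17 (N n d : ℕ) (hN : 3 ≤ N) (hd : 1 ≤ d) (hn : 1 ≤ n)
    (a : (Fin n → Fin N) → ℂ)
    (hdeg : ∀ α : Fin n → Fin N, d < ∑ j, (α j : ℕ) → a α = 0)
    (hbdd : ∀ z : Fin n → ℂ, (∀ j, z j ^ N = 1) →
      ‖∑ α : Fin n → Fin N, a α * ∏ j, z j ^ (α j : ℕ)‖ ≤ 1)
    (B : ℝ) (hB : 0 ≤ B)
    (hBH : (∑ α : Fin n → Fin N, ‖a α‖ ^ ((2 * d : ℝ) / (d + 1)))
        ^ ((d + 1 : ℝ) / (2 * d)) ≤ B)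
    (ε : ℝ) (hε : 0 < ε) :
    ∃ (b : (Fin n → Fin N) → ℂ) (S : Finset (Fin n)),
      (S.card : ℝ) ≤ d * B ^ (2 * d) / ε ^ (2 * d) ∧
      (∀ α : Fin n → Fin N, b α ≠ 0 → ∀ j, (α j : ℕ) ≠ 0 → j ∈ S) ∧
      ∑ α : Fin n → Fin N, ‖a α - b α‖ ^ 2 ≤ ε ^ 2 := by
  classical
  have hd1 : (1:ℝ) ≤ (d:ℝ) := by exact_mod_cast hd
  have hd0 : (0:ℝ) < (d:ℝ) := by linarith
  have hdd : (d:ℝ) + 1 ≠ 0 := by positivity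
  set p : ℝ := (2 * d : ℝ) / (d + 1) with hp_def
  have hp : 0 < p := by positivity
  set Sp : ℝ := ∑ α : Fin n → Fin N, ‖a α‖ ^ p with hSp_def
  have hSp0 : 0 ≤ Sp := Finset.sum_nonneg fun α _ => Real.rpow_nonneg (norm_nonneg _) _
  by_cases hB0 : B = 0
  · -- degenerate case: all coefficients vanish
    have hsum0 : Sp = 0 := by
      by_contra h
      have hpos : 0 < Sp := lt_of_le_of_ne hSp0 (Ne.symm h)
      have := Real.rpow_pos_of_pos hpos ((d + 1 : ℝ) / (2 * d))
      rw [hB0] at hBH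
      linarith
    have ha : ∀ α, a α = 0 := by
      intro α
      have h := (Finset.sum_eq_zero_iff_of_nonneg
        (fun α _ => Real.rpow_nonneg (norm_nonneg _) _)).mp hsum0 α (Finset.mem_univ _)
      have hp0 : p ≠ 0 := ne_of_gt hp
      have := (Real.rpow_eq_zero (norm_nonneg _) hp0).mp h
      exact norm_eq_zero.mp this
    refine ⟨0, ∅, ?_, by simp, ?_⟩
    · simp only [Finset.card_empty, Nat.cast_zero]
      positivity
    · simp only [Pi.zero_apply, sub_zero]
      have : ∑ α : Fin n → Fin N, ‖a α‖ ^ 2 = 0 := by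
        apply Finset.sum_eq_zero; intro α _; rw [ha α]; simp
      rw [this]; positivity
  · have hBpos : 0 < B := lt_of_le_of_ne hB (Ne.symm hB0)
    -- Sp ≤ B ^ p
    have hSpB : Sp ≤ B ^ p := by
      have h1 : (Sp ^ ((d + 1 : ℝ) / (2 * d))) ^ p ≤ B ^ p :=
        Real.rpow_le_rpow (Real.rpow_nonneg hSp0 _) hBH hp.le
      rwa [← Real.rpow_mul hSp0, show ((d + 1 : ℝ) / (2 * d)) * p = 1 by
        rw [hp_def]; field_simp, Real.rpow_one] at h1
    set lam : ℝ := ε ^ (d + 1) / B ^ d with hlam_def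
    have hlam : 0 < lam := by positivity
    set T : Finset (Fin n → Fin N) :=
      Finset.univ.filter (fun α => lam ≤ ‖a α‖) with hT_def
    set b : (Fin n → Fin N) → ℂ :=
      fun α => if lam ≤ ‖a α‖ then a α else 0 with hb_def
    set S : Finset (Fin n) :=
      T.biUnion (fun α => Finset.univ.filter (fun j => (α j : ℕ) ≠ 0)) with hS_def
    -- key rpow algebra
    have hlam_rpow : ∀ q : ℝ, lam ^ q = ε ^ (((d:ℝ) + 1) * q) / B ^ ((d:ℝ) * q) := by
      intro q
      rw [hlam_def, Real.div_rpow (by positivity) (by positivity),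
        ← Real.rpow_natCast ε (d+1), ← Real.rpow_natCast B d,
        ← Real.rpow_mul hε.le, ← Real.rpow_mul hBpos.le]
      push_cast
      ring_nf
    have hdp1 : ((d:ℝ) + 1) * p = 2 * d := by rw [hp_def]; field_simp
    have hdp2 : (d:ℝ) * (2 - p) = p := by rw [hp_def]; field_simp; ring
    have hdp3 : ((d:ℝ) + 1) * (2 - p) = 2 := by rw [hp_def]; field_simp; ring
    -- count bound
    have hTle : (T.card : ℝ) * lam ^ p ≤ Sp := by
      have h2 : ∑ α ∈ T, lam ^ p ≤ ∑ α ∈ T, ‖a α‖ ^ p := by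
        apply Finset.sum_le_sum
        intro α hα
        exact Real.rpow_le_rpow hlam.le (Finset.mem_filter.mp hα).2 hp.le
      have h3 : ∑ α ∈ T, ‖a α‖ ^ p ≤ Sp := by
        apply Finset.sum_le_sum_of_subset_of_nonneg (Finset.filter_subset _ _)
        intro α _ _
        exact Real.rpow_nonneg (norm_nonneg _) _
      calc (T.card : ℝ) * lam ^ p = ∑ α ∈ T, lam ^ p := by
            rw [Finset.sum_const, nsmul_eq_mul]
        _ ≤ Sp := le_trans h2 h3
    have hlamp_pos : 0 < lam ^ p := Real.rpow_pos_of_pos hlam p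
    have hTcard : (T.card : ℝ) ≤ B ^ (2 * d) / ε ^ (2 * d) := by
      have h4 : (T.card : ℝ) ≤ B ^ p / lam ^ p := by
        rw [le_div_iff₀ hlamp_pos]
        exact le_trans hTle hSpB
      have hBmul : B ^ p * B ^ ((d:ℝ) * p) = B ^ (2 * d) := by
        rw [← Real.rpow_add hBpos, show p + (d:ℝ) * p = ((d:ℝ) + 1) * p from by ring, hdp1,
          show (2 * (d:ℝ)) = ((2 * d : ℕ) : ℝ) from by push_cast; ring, Real.rpow_natCast]
      have hεeq : ε ^ (2 * (d:ℝ)) = ε ^ (2 * d) := by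
        rw [show (2 * (d:ℝ)) = ((2 * d : ℕ) : ℝ) from by push_cast; ring, Real.rpow_natCast]
      have h5 : B ^ p / lam ^ p = B ^ (2 * d) / ε ^ (2 * d) := by
        rw [hlam_rpow p, hdp1, div_div_eq_mul_div, hBmul, hεeq]
      rwa [h5] at h4
    have hp2 : p ≤ 2 := by rw [hp_def, div_le_iff₀ (by positivity)]; linarith
    have hsupp : ∀ α ∈ T, (Finset.univ.filter (fun j => (α j : ℕ) ≠ 0)).card ≤ d := by
      intro α hα
      have hane : a α ≠ 0 := by
        intro h0
        have h2 := (Finset.mem_filter.mp hα).2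
        rw [h0] at h2
        simp only [norm_zero] at h2
        linarith
      have hdeg' : ∑ j, (α j : ℕ) ≤ d := by
        by_contra h
        exact hane (hdeg α (lt_of_not_ge h))
      calc (Finset.univ.filter (fun j => (α j : ℕ) ≠ 0)).card
          = ∑ j ∈ Finset.univ.filter (fun j => (α j : ℕ) ≠ 0), 1 :=
            Finset.card_eq_sum_ones _
        _ ≤ ∑ j ∈ Finset.univ.filter (fun j => (α j : ℕ) ≠ 0), (α j : ℕ) :=
            Finset.sum_le_sum (fun j hj =>
              Nat.one_le_iff_ne_zero.mpr (Finset.mem_filter.mp hj).2)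
        _ ≤ ∑ j, (α j : ℕ) := Finset.sum_le_sum_of_subset (Finset.filter_subset _ _)
        _ ≤ d := hdeg'
    have hScard : S.card ≤ T.card * d := by
      calc S.card ≤ ∑ α ∈ T, (Finset.univ.filter (fun j => (α j : ℕ) ≠ 0)).card :=
            Finset.card_biUnion_le
        _ ≤ ∑ _α ∈ T, d := Finset.sum_le_sum hsupp
        _ = T.card * d := by rw [Finset.sum_const, smul_eq_mul]
    refine ⟨b, S, ?_, ?_, ?_⟩
    · calc (S.card : ℝ) ≤ (T.card : ℝ) * d := by exact_mod_cast hScard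
        _ ≤ (B ^ (2 * d) / ε ^ (2 * d)) * d :=
            mul_le_mul_of_nonneg_right hTcard hd0.le
        _ = d * B ^ (2 * d) / ε ^ (2 * d) := by ring
    · intro α hbα j hj
      have hmem : α ∈ T := by
        rw [hT_def]
        simp only [Finset.mem_filter, Finset.mem_univ, true_and]
        by_contra h
        apply hbα
        rw [hb_def]
        simp [h]
      rw [hS_def]
      exact Finset.mem_biUnion.mpr ⟨α, hmem, by simp [hj]⟩
    · have hterm : ∀ α : Fin n → Fin N,
          ‖a α - b α‖ ^ 2 ≤ lam ^ (2 - p) * ‖a α‖ ^ p := by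
        intro α
        have hrhs : 0 ≤ lam ^ (2 - p) * ‖a α‖ ^ p :=
          mul_nonneg (Real.rpow_nonneg hlam.le _) (Real.rpow_nonneg (norm_nonneg _) _)
        rw [hb_def]
        by_cases h : lam ≤ ‖a α‖
        · simp only [h, if_true, sub_self, map_zero]
          simpa using hrhs
        · simp only [h, if_false, sub_zero]
          push_neg at h
          by_cases h0 : a α = 0
          · rw [h0]
            simp only [norm_zero]
            have : (0:ℝ) ^ (2:ℕ) = 0 := by norm_num
            rw [this]
            positivity
          · have habs : 0 < ‖a α‖ := norm_pos_iff.mpr h0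
            have e1 : ‖a α‖ ^ (2:ℕ)
                = ‖a α‖ ^ ((2:ℝ) - p) * ‖a α‖ ^ p := by
              rw [← Real.rpow_add habs, sub_add_cancel,
                show ((2:ℝ)) = ((2:ℕ):ℝ) from by norm_num, Real.rpow_natCast]
            rw [e1]
            exact mul_le_mul_of_nonneg_right
              (Real.rpow_le_rpow (norm_nonneg _) h.le (by linarith))
              (Real.rpow_nonneg (norm_nonneg _) _)
      have hfin : lam ^ (2 - p) * B ^ p = ε ^ 2 := by
        rw [hlam_rpow (2 - p), hdp3, hdp2,
          div_mul_cancel₀ _ (ne_of_gt (Real.rpow_pos_of_pos hBpos p)),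
          show ((2:ℝ)) = ((2:ℕ):ℝ) from by norm_num, Real.rpow_natCast]
      calc ∑ α : Fin n → Fin N, ‖a α - b α‖ ^ 2
          ≤ ∑ α : Fin n → Fin N, lam ^ (2 - p) * ‖a α‖ ^ p :=
            Finset.sum_le_sum (fun α _ => hterm α)
        _ = lam ^ (2 - p) * Sp := by rw [hSp_def, Finset.mul_sum]
        _ ≤ lam ^ (2 - p) * B ^ p :=
            mul_le_mul_of_nonneg_left hSpB (Real.rpow_nonneg hlam.le _)
        _ = ε ^ 2 := hfin
end
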